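/- The semantics of Δα can be characterized by unfolding: Π ⊨_T Δα if and only if there exists k ≥ 0 such that (Π, 0, k) ∈ R(α) and Π[k, ∞] ⊨_T Δα. (In ordered form: Π ⊨ Δα iff there is a strictly monotone-unbounded or eventually constant sequence 0 = k₁ ≤ k₂ ≤ … with (Π, k_i, k_{i+1}) ∈ R(α) for all i ≥ 1.) -/
import Mathlib


/-- A trace: an infinite alternating sequence of labels (sets of atomic propositions)
and atomic programs; `lab j` is the label at step `j`, `act j` the atomic program
between steps `j` and `j+1`. -/
structure Trace (AP P : Type) where
  lab : ℕ → Set AP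
  act : ℕ → P

/-- The suffix of a trace starting after `j` steps. -/
def Trace.drop {AP P : Type} (t : Trace AP P) (j : ℕ) : Trace AP P :=
  ⟨fun m => t.lab (j + m), fun m => t.act (j + m)⟩

/-- The shifted trace assignment. -/
def TAdrop {AP P : Type} {n : ℕ} (Pa : Fin n → Trace AP P) (j : ℕ) : Fin n → Trace AP P :=
  fun l => (Pa l).drop j

mutual
/-- Quantifier-free HyperPDL-Δ formulas over `n` path variables. -/
inductive QF (AP P : Type) (n : ℕ) : Type
  | atom (a : AP) (l : Fin n) : QF AP P n
  | not (φ : QF AP P n) : QF AP P n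
  | and (φ ψ : QF AP P n) : QF AP P n
  | or (φ ψ : QF AP P n) : QF AP P n
  | dia (α : Pg AP P n) (φ : QF AP P n) : QF AP P n
  | box (α : Pg AP P n) (φ : QF AP P n) : QF AP P n
  | delta (α : Pg AP P n) : QF AP P n

/-- Programs of HyperPDL-Δ (with `none` as the wildcard coordinate). -/
inductive Pg (AP P : Type) (n : ℕ) : Type
  | atom (t : Fin n → Option P) : Pg AP P n
  | eps : Pg AP P n
  | sum (a b : Pg AP P n) : Pg AP P n
  | seq (a b : Pg AP P n) : Pg AP P n
  | star (a : Pg AP P n) : Pg AP P n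
  | test (φ : QF AP P n) : Pg AP P n
end

mutual
/-- Satisfaction of a quantifier-free formula by a trace assignment. -/
def QF.Sat {AP P : Type} {n : ℕ} : QF AP P n → (Fin n → Trace AP P) → Prop
  | .atom a l, Pa => a ∈ (Pa l).lab 0
  | .not φ, Pa => ¬ φ.Sat Pa
  | .and φ ψ, Pa => φ.Sat Pa ∧ ψ.Sat Pa
  | .or φ ψ, Pa => φ.Sat Pa ∨ ψ.Sat Pa
  | .dia α φ, Pa => ∃ j, α.Rel Pa 0 j ∧ φ.Sat (TAdrop Pa j)
  | .box α φ, Pa => ∀ j, α.Rel Pa 0 j → φ.Sat (TAdrop Pa j)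
  | .delta α, Pa => ∃ k : ℕ → ℕ, k 0 = 0 ∧ (∀ i, k i ≤ k (i + 1)) ∧
      ∀ i, α.Rel Pa (k i) (k (i + 1))

/-- The relation `(Π, i, k) ∈ R(α)` (indices count steps). -/
def Pg.Rel {AP P : Type} {n : ℕ} : Pg AP P n → (Fin n → Trace AP P) → ℕ → ℕ → Prop
  | .atom t, Pa, i, k => k = i + 1 ∧ ∀ l, t l = none ∨ t l = some ((Pa l).act i)
  | .eps, _, i, k => i = k
  | .sum a b, Pa, i, k => a.Rel Pa i k ∨ b.Rel Pa i k
  | .seq a b, Pa, i, k => ∃ j, i ≤ j ∧ j ≤ k ∧ a.Rel Pa i j ∧ b.Rel Pa j k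
  | .star a, Pa, i, k => ∃ (m : ℕ) (js : Fin (m + 1) → ℕ), js 0 = i ∧ js (Fin.last m) = k ∧
      ∀ l : Fin m, js l.castSucc ≤ js l.succ ∧ a.Rel Pa (js l.castSucc) (js l.succ)
  | .test φ, Pa, i, k => i = k ∧ φ.Sat (TAdrop Pa i)
end

theorem TAdrop_comp {AP P : Type} {n : ℕ} (Pa : Fin n → Trace AP P) (j i : ℕ) :
    TAdrop (TAdrop Pa j) i = TAdrop Pa (j + i) := by
  funext l
  simp only [TAdrop, Trace.drop, Trace.mk.injEq]
  constructor <;> (funext m; simp [Nat.add_assoc])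

theorem rel_shift {AP P : Type} {n : ℕ} :
    ∀ (α : Pg AP P n) (Pa : Fin n → Trace AP P) (j i k : ℕ),
      α.Rel (TAdrop Pa j) i k ↔ α.Rel Pa (j + i) (j + k)
  | .atom t, Pa, j, i, k => by
      simp only [Pg.Rel, TAdrop, Trace.drop]
      constructor
      · rintro ⟨rfl, h⟩; exact ⟨by omega, h⟩
      · rintro ⟨h1, h2⟩; exact ⟨by omega, h2⟩
  | .eps, Pa, j, i, k => by simp only [Pg.Rel]; omega
  | .sum a b, Pa, j, i, k => by
      simp only [Pg.Rel, rel_shift a, rel_shift b]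
  | .seq a b, Pa, j, i, k => by
      simp only [Pg.Rel, rel_shift a, rel_shift b]
      constructor
      · rintro ⟨m, h1, h2, h3, h4⟩
        exact ⟨j + m, by omega, by omega, h3, h4⟩
      · rintro ⟨m, h1, h2, h3, h4⟩
        refine ⟨m - j, by omega, by omega, ?_, ?_⟩
        · rwa [Nat.add_sub_cancel' (by omega : j ≤ m)]
        · rwa [Nat.add_sub_cancel' (by omega : j ≤ m)]
  | .star a, Pa, j, i, k => by
      simp only [Pg.Rel]
      constructor
      · rintro ⟨m, js, h0, hl, hs⟩
        refine ⟨m, fun l => j + js l, by simp [h0], by simp [hl], fun l => ?_⟩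
        obtain ⟨h1, h2⟩ := hs l
        dsimp only
        exact ⟨by omega, (rel_shift a Pa j _ _).1 h2⟩
      · rintro ⟨m, js, h0, hl, hs⟩
        have hge : ∀ l : Fin (m + 1), j ≤ js l := by
          intro l
          obtain ⟨v, hv⟩ := l
          induction v with
          | zero => simp only [show (⟨0, hv⟩ : Fin (m+1)) = 0 from rfl, h0]; omega
          | succ p ih =>
            have hp : p < m + 1 := by omega
            have := (hs ⟨p, by omega⟩).1
            have hcast : (⟨p, by omega⟩ : Fin m).castSucc = ⟨p, hp⟩ := rfl
            have hsucc : (⟨p, by omega⟩ : Fin m).succ = ⟨p + 1, hv⟩ := rfl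
            rw [hcast, hsucc] at this
            exact le_trans (ih hp) this
        refine ⟨m, fun l => js l - j, ?_, ?_, fun l => ?_⟩
        · dsimp only; omega
        · dsimp only; omega
        · obtain ⟨h1, h2⟩ := hs l
          dsimp only
          refine ⟨by omega, ?_⟩
          rw [rel_shift a Pa j,
            Nat.add_sub_cancel' (hge l.castSucc), Nat.add_sub_cancel' (hge l.succ)]
          exact h2
  | .test φ, Pa, j, i, k => by
      simp only [Pg.Rel, TAdrop_comp]
      constructor
      · rintro ⟨rfl, h⟩; exact ⟨rfl, h⟩
      · rintro ⟨h1, h2⟩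
        refine ⟨by omega, ?_⟩
        have : i = k := by omega
        subst this; exact h2

theorem k_mono {k : ℕ → ℕ} (h : ∀ i, k i ≤ k (i + 1)) : ∀ i m, i ≤ m → k i ≤ k m :=
  fun _ _ him => monotone_nat_of_le_succ h him

/-- **Unfolding of `Δα`**: `Π ⊨ Δα` holds iff some prefix of the assignment matches `α`
and the corresponding suffix again satisfies `Δα`. -/
theorem delta_unfold {AP P : Type} {n : ℕ} (α : Pg AP P n) (Pa : Fin n → Trace AP P) :
    (QF.delta α).Sat Pa ↔ ∃ k, α.Rel Pa 0 k ∧ (QF.delta α).Sat (TAdrop Pa k) := by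
  simp only [QF.Sat]
  constructor
  · rintro ⟨k, hk0, hmono, hrel⟩
    refine ⟨k 1, by simpa [hk0] using hrel 0, fun i => k (i + 1) - k 1, by simp, ?_, ?_⟩
    · intro i
      dsimp only
      have := k_mono hmono (i + 1) (i + 1 + 1) (by omega)
      omega
    · intro i
      dsimp only
      have h1 : k 1 ≤ k (i + 1) := k_mono hmono 1 (i + 1) (by omega)
      have h2 : k 1 ≤ k (i + 1 + 1) := k_mono hmono 1 (i + 1 + 1) (by omega)
      rw [rel_shift, Nat.add_sub_cancel' h1, Nat.add_sub_cancel' h2]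
      exact hrel (i + 1)
  · rintro ⟨K, hK, k', hk0, hmono, hrel⟩
    refine ⟨fun i => match i with | 0 => 0 | (i + 1) => K + k' i, rfl, ?_, ?_⟩
    · intro i
      match i with
      | 0 => simp [hk0]
      | (i + 1) => simpa using hmono i
    · intro i
      match i with
      | 0 => simpa [hk0] using hK
      | (i + 1) =>
        have := (rel_shift α Pa K (k' i) (k' (i + 1))).1 (hrel i)
        exact this
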